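/- In the prefix graph G of a set of m state sequences each of length n, every directed path from the source vertex v_s = (0,…,0) of length ℓ corresponds to a valid flow diagram with exactly ℓ interior nodes representing segmentations of prefixes of the state sequences; consequently a shortest v_s–v_t path in G has length equal to the minimum number of interior nodes of any valid flow diagram, plus one. -/
import Mathlib


/-- Edge of the prefix graph `G` on the grid `{0,…,n}^m`: from `x` to `x'` iff
componentwise `x ≤ x' ≤ n`, `x ≠ x'`, and some criterion `C_j` is jointly fulfilled by
the nonempty segments `τ_i[x_i+1, x'_i]` (fulfilment abstracted as `Ful j x x'`). -/
def GEdge (m n k : ℕ) (Ful : Fin k → (Fin m → ℕ) → (Fin m → ℕ) → Prop)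
    (x x' : Fin m → ℕ) : Prop :=
  (∀ i, x i ≤ x' i) ∧ (∀ i, x' i ≤ n) ∧ x ≠ x' ∧ ∃ j, Ful j x x'

/-- A valid flow diagram (with its interior nodes listed in a topological order
`0, 1, …, N-1`) representing, for each state sequence `τ_i`, a segmentation of a prefix
of `τ_i`; the segmentations are jointly realized: `pos l i` is the prefix of `τ_i`
consumed after the first `l` nodes, node `l` advances exactly the sequences it is used
by, and the segments of node `l` jointly fulfil its criterion. -/
structure PrefixFD (m n k : ℕ)
    (Ful : Fin k → (Fin m → ℕ) → (Fin m → ℕ) → Prop) where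
  N : ℕ
  crit : ∀ l : ℕ, l < N → Fin k
  uses : ℕ → Fin m → Prop
  pos : ℕ → Fin m → ℕ
  pos_zero : ∀ i, pos 0 i = 0
  pos_le : ∀ l ≤ N, ∀ i, pos l i ≤ n
  mono : ∀ l < N, ∀ i, pos l i ≤ pos (l + 1) i
  stay : ∀ l < N, ∀ i, ¬ uses l i → pos (l + 1) i = pos l i
  advance : ∀ l < N, ∀ i, uses l i → pos l i < pos (l + 1) i
  node_nonempty : ∀ l < N, ∃ i, uses l i
  fulfils : ∀ (l : ℕ) (h : l < N), Ful (crit l h) (pos l) (pos (l + 1))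

/-- directed paths of length `ℓ` in the prefix graph starting at
`v_s = (0,…,0)` correspond exactly to valid flow diagrams with `ℓ` interior nodes
representing segmentations of prefixes of the state sequences; consequently the
length of a shortest `v_s`–`v_t` path (a grid path to `(n,…,n)` followed by the edge to
`v_t`) equals the minimum number of interior nodes of a valid flow diagram, plus one. -/

lemma path_to_FD {m n k : ℕ} {Ful : Fin k → (Fin m → ℕ) → (Fin m → ℕ) → Prop}
    {p : ℕ → Fin m → ℕ} {ℓ : ℕ}
    (h0 : p 0 = (fun _ => 0))
    (he : ∀ l < ℓ, GEdge m n k Ful (p l) (p (l + 1))) :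
    ∃ F : PrefixFD m n k Ful, F.N = ℓ ∧ F.pos = p := by
  classical
  refine ⟨{ N := ℓ
            crit := fun l h => ((he l h).2.2.2).choose
            uses := fun l i => p l i < p (l + 1) i
            pos := p
            pos_zero := fun i => by rw [h0]
            pos_le := ?_
            mono := fun l h i => (he l h).1 i
            stay := fun l h i hni => Nat.le_antisymm (Nat.le_of_not_lt hni) ((he l h).1 i)
            advance := fun l h i hi => hi
            node_nonempty := ?_
            fulfils := fun l h => ((he l h).2.2.2).choose_spec }, rfl, rfl⟩
  · intro l hl i
    cases l with
    | zero => simp [h0]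
    | succ l' => exact (he l' (by omega)).2.1 i
  · intro l h
    have hne := (he l h).2.2.1
    rw [Function.ne_iff] at hne
    obtain ⟨i, hi⟩ := hne
    exact ⟨i, lt_of_le_of_ne ((he l h).1 i) hi⟩

lemma FD_to_path {m n k : ℕ} {Ful : Fin k → (Fin m → ℕ) → (Fin m → ℕ) → Prop}
    (F : PrefixFD m n k Ful) :
    F.pos 0 = (fun _ => 0) ∧ ∀ l < F.N, GEdge m n k Ful (F.pos l) (F.pos (l + 1)) := by
  constructor
  · funext i; exact F.pos_zero i
  · intro l hl
    refine ⟨F.mono l hl, F.pos_le (l + 1) (by omega), ?_, ⟨F.crit l hl, F.fulfils l hl⟩⟩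
    obtain ⟨i, hi⟩ := F.node_nonempty l hl
    intro heq
    have := F.advance l hl i hi
    rw [heq] at this
    exact lt_irrefl _ this

theorem stmt_3 (m n k : ℕ)
    (Ful : Fin k → (Fin m → ℕ) → (Fin m → ℕ) → Prop) :
    (∀ ℓ : ℕ,
      (∃ p : ℕ → Fin m → ℕ, p 0 = (fun _ => 0) ∧
        ∀ l < ℓ, GEdge m n k Ful (p l) (p (l + 1))) ↔
      (∃ F : PrefixFD m n k Ful, F.N = ℓ)) ∧
    (∀ c : ℕ,
      IsLeast {c' : ℕ | ∃ F : PrefixFD m n k Ful,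
          F.N = c' ∧ ∀ i, F.pos F.N i = n} c ↔
      IsLeast {ℓ : ℕ | ∃ ℓ' : ℕ, ℓ = ℓ' + 1 ∧
          ∃ p : ℕ → Fin m → ℕ, p 0 = (fun _ => 0) ∧
            (∀ l < ℓ', GEdge m n k Ful (p l) (p (l + 1))) ∧
            ∀ i, p ℓ' i = n} (c + 1)) := by
  classical
  have key : ∀ ℓ : ℕ,
      (∃ p : ℕ → Fin m → ℕ, p 0 = (fun _ => 0) ∧
        (∀ l < ℓ, GEdge m n k Ful (p l) (p (l + 1))) ∧ ∀ i, p ℓ i = n) ↔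
      (∃ F : PrefixFD m n k Ful, F.N = ℓ ∧ ∀ i, F.pos F.N i = n) := by
    intro ℓ
    constructor
    · rintro ⟨p, h0, he, hend⟩
      obtain ⟨F, hN, hpos⟩ := path_to_FD h0 he
      exact ⟨F, hN, by rw [hN, hpos]; exact hend⟩
    · rintro ⟨F, hN, hend⟩
      obtain ⟨h0, he⟩ := FD_to_path F
      exact ⟨F.pos, h0, fun l hl => he l (hN ▸ hl), fun i => by rw [← hN]; exact hend i⟩
  constructor
  · intro ℓ
    constructor
    · rintro ⟨p, h0, he⟩
      obtain ⟨F, hN, _⟩ := path_to_FD h0 he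
      exact ⟨F, hN⟩
    · rintro ⟨F, hN⟩
      obtain ⟨h0, he⟩ := FD_to_path F
      exact ⟨F.pos, h0, fun l hl => he l (hN ▸ hl)⟩
  · intro c
    constructor
    · rintro ⟨hc, hlb⟩
      constructor
      · obtain ⟨p, h0, he, hend⟩ := (key c).mpr hc
        exact ⟨c, rfl, p, h0, he, hend⟩
      · rintro b ⟨ℓ', rfl, p, h0, he, hend⟩
        have : ℓ' ∈ {c' : ℕ | ∃ F : PrefixFD m n k Ful,
            F.N = c' ∧ ∀ i, F.pos F.N i = n} := (key ℓ').mp ⟨p, h0, he, hend⟩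
        exact Nat.add_le_add_right (hlb this) 1
    · rintro ⟨hc, hlb⟩
      obtain ⟨ℓ', heq, p, h0, he, hend⟩ := hc
      have hℓ : c = ℓ' := by omega
      subst hℓ
      constructor
      · exact (key c).mp ⟨p, h0, he, hend⟩
      · intro c' hc'
        obtain ⟨p', h0', he', hend'⟩ := (key c').mpr hc'
        have : c' + 1 ∈ {ℓ : ℕ | ∃ ℓ'' : ℕ, ℓ = ℓ'' + 1 ∧
            ∃ q : ℕ → Fin m → ℕ, q 0 = (fun _ => 0) ∧
              (∀ l < ℓ'', GEdge m n k Ful (q l) (q (l + 1))) ∧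
              ∀ i, q ℓ'' i = n} := ⟨c', rfl, p', h0', he', hend'⟩
        have := hlb this
        omega
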